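/- arXiv:2201.12820 — 3 statements merged into one kernel-verified Lean document; each statement's English description precedes it below -/
import Mathlib

section
/- Let X be a nonempty connected topological space having only finitely many irreducible components C₁, …, C_r (r ≥ 1). Let S be the set of points of X that lie on at least two irreducible components. Assume that S is finite and that every point of S lies on exactly two of the irreducible components. Then r ≤ |S| + 1. -/
open Finset in
/-- Combinatorial core: a "connected" finite graph (given by the cut condition) on vertex
set `V` with edge set `E` satisfies `V.card ≤ E.card + 1`. -/
theorem graph_bound_aux {α : Type*} : ∀ (n : ℕ) (V : Finset α) (E : Finset (Sym2 α)),
    V.card = n →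
    (∀ T ⊆ V, T.Nonempty → T ≠ V → ∃ a ∈ T, ∃ b ∈ V, b ∉ T ∧ s(a, b) ∈ E) →
    V.card ≤ E.card + 1 := by
  classical
  intro n
  induction n with
  | zero => intro V E h _; omega
  | succ n ih =>
    intro V E hcard hcut
    rcases Nat.lt_or_ge V.card 2 with h2 | h2
    · omega
    -- pick a vertex v and an edge s(v, w) with w ≠ v
    have hVne : V.Nonempty := Finset.card_pos.mp (by omega)
    obtain ⟨v, hv⟩ := hVne
    have hsingle : ({v} : Finset α) ≠ V := by
      intro h; rw [← h] at h2; simp at h2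
    obtain ⟨a, ha, w, hwV, hwT, hedge⟩ :=
      hcut {v} (Finset.singleton_subset_iff.mpr hv) ⟨v, Finset.mem_singleton_self v⟩ hsingle
    rw [Finset.mem_singleton.mp ha] at hedge
    have hwv : w ≠ v := by simpa using hwT
    -- contraction map
    set g : α → α := fun x => if x = v then w else x with hg
    have hgv : g v = w := by simp [hg]
    have hgne : ∀ x, x ≠ v → g x = x := fun x hx => by simp [hg, hx]
    set V' : Finset α := V.erase v with hV'
    set E' : Finset (Sym2 α) := (E.image (Sym2.map g)).erase s(w, w) with hE'
    have hVcard : V'.card = n := by rw [hV', Finset.card_erase_of_mem hv]; omega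
    have hloop : s(w, w) ∈ E.image (Sym2.map g) := by
      refine Finset.mem_image.mpr ⟨s(v, w), hedge, ?_⟩
      simp [Sym2.map_pair_eq, hgv, hgne w hwv]
    have hEcard : E'.card + 1 ≤ E.card := by
      rw [hE', Finset.card_erase_of_mem hloop]
      have h1 : 1 ≤ (E.image (Sym2.map g)).card := Finset.card_pos.mpr ⟨_, hloop⟩
      have := Finset.card_image_le (f := Sym2.map g) (s := E)
      omega
    -- cut condition for the contracted graph
    have hcut' : ∀ T ⊆ V', T.Nonempty → T ≠ V' →
        ∃ a ∈ T, ∃ b ∈ V', b ∉ T ∧ s(a, b) ∈ E' := by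
      intro T' hT'sub hT'ne hT'neq
      have hvT' : v ∉ T' := fun h => (Finset.mem_erase.mp (hT'sub h)).1 rfl
      set T : Finset α := if w ∈ T' then insert v T' else T' with hT
      have hTsub : T ⊆ V := by
        rw [hT]; split
        · exact Finset.insert_subset hv (hT'sub.trans (Finset.erase_subset _ _))
        · exact hT'sub.trans (Finset.erase_subset _ _)
      have hTne : T.Nonempty := by
        rw [hT]; split
        · exact Finset.insert_nonempty _ _
        · exact hT'ne
      -- a membership transfer: for x ∈ V, x ∈ T ↔ g x ∈ T'
      have hmem : ∀ x, (x ∈ T ↔ g x ∈ T') := by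
        intro x
        by_cases hx : x = v
        · subst hx
          rw [hgv, hT]
          constructor
          · intro h
            by_contra hw
            rw [if_neg hw] at h
            exact hvT' h
          · intro h; rw [if_pos h]; exact Finset.mem_insert_self _ _
        · rw [hgne x hx, hT]
          split
          · rw [Finset.mem_insert]
            exact ⟨fun h => h.resolve_left hx, Or.inr⟩
          · rfl
      have hTneq : T ≠ V := by
        obtain ⟨u, huV', huT'⟩ := Finset.exists_of_ssubset (hT'sub.ssubset_of_ne hT'neq)
        have huv : u ≠ v := (Finset.mem_erase.mp huV').1
        intro h
        have : u ∈ T := h ▸ (Finset.mem_erase.mp huV').2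
        rw [hmem u, hgne u huv] at this
        exact huT' this
      obtain ⟨a, haT, b, hbV, hbT, hab⟩ := hcut T hTsub hTne hTneq
      refine ⟨g a, (hmem a).mp haT, g b, ?_, fun h => hbT ((hmem b).mpr h), ?_⟩
      · -- g b ∈ V'
        rw [hV', Finset.mem_erase]
        by_cases hb : b = v
        · subst hb; rw [hgv]; exact ⟨hwv, hwV⟩
        · rw [hgne b hb]; exact ⟨hb, hbV⟩
      · -- edge in E'
        rw [hE', Finset.mem_erase]
        constructor
        · intro h
          rw [Sym2.eq_iff] at h
          have hga : g a ∈ T' := (hmem a).mp haT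
          have hgb : g b ∉ T' := fun h => hbT ((hmem b).mpr h)
          rcases h with ⟨h1, h2⟩ | ⟨h1, h2⟩ <;> rw [h1] at hga <;> rw [h2] at hgb <;>
            exact hgb hga
        · exact Finset.mem_image.mpr ⟨s(a, b), hab, by simp [Sym2.map_pair_eq]⟩
    have := ih V' E' hVcard hcut'
    omega

/-- Let `X` be a nonempty connected topological space with finitely many
irreducible components.  Let `S` be the set of points lying on at least two irreducible
components.  If `S` is finite and every point of `S` lies on exactly two irreducible
components, then the number of irreducible components is at most `|S| + 1`. -/
theorem stmt3 (X : Type) [TopologicalSpace X] [Nonempty X]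
    (hconn : ConnectedSpace X)
    (hfin : (irreducibleComponents X).Finite)
    (S : Set X)
    (hS : S = {x : X | 2 ≤ {C ∈ irreducibleComponents X | x ∈ C}.ncard})
    (hSfin : S.Finite)
    (htwo : ∀ x ∈ S, {C ∈ irreducibleComponents X | x ∈ C}.ncard = 2) :
    (irreducibleComponents X).ncard ≤ S.ncard + 1 := by
  classical
  -- for x ∈ S, choose the two components containing x
  have hex : ∀ x : X, ∃ p : Set X × Set X, x ∈ S →
      p.1 ≠ p.2 ∧ {C ∈ irreducibleComponents X | x ∈ C} = {p.1, p.2} := by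
    intro x
    by_cases hx : x ∈ S
    · obtain ⟨a, b, hab, hset⟩ := Set.ncard_eq_two.mp (htwo x hx)
      exact ⟨(a, b), fun _ => ⟨hab, hset⟩⟩
    · exact ⟨(∅, ∅), fun h => absurd h hx⟩
  choose p hp using hex
  set V : Finset (Set X) := hfin.toFinset with hV
  set E : Finset (Sym2 (Set X)) := hSfin.toFinset.image (fun x => s((p x).1, (p x).2)) with hE
  have hVcard : V.card = (irreducibleComponents X).ncard := (Set.ncard_eq_toFinset_card _ hfin).symm
  have hEcard : E.card ≤ S.ncard := by
    rw [hE, Set.ncard_eq_toFinset_card S hSfin]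
    exact Finset.card_image_le
  rw [← hVcard]
  refine le_trans (graph_bound_aux V.card V E rfl ?_) (by omega)
  -- the cut condition from connectedness
  intro T hTsub hTne hTneq
  set A : Set X := ⋃ C ∈ T, (C : Set X) with hA
  set B : Set X := ⋃ C ∈ V \ T, (C : Set X) with hB
  have hclosed : ∀ C ∈ V, IsClosed (C : Set X) := by
    intro C hC
    exact isClosed_of_mem_irreducibleComponents C (by rwa [hV, Set.Finite.mem_toFinset] at hC)
  have hAclosed : IsClosed A := Set.Finite.isClosed_biUnion (T.finite_toSet)
    (fun C hC => hclosed C (hTsub hC))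
  have hBclosed : IsClosed B := Set.Finite.isClosed_biUnion ((V \ T).finite_toSet)
    (fun C hC => hclosed C (Finset.mem_sdiff.mp hC).1)
  have hcover : A ∪ B = Set.univ := by
    ext x
    simp only [Set.mem_union, Set.mem_univ, iff_true, hA, hB, Set.mem_iUnion]
    have hx : irreducibleComponent x ∈ V := by
      rw [hV, Set.Finite.mem_toFinset]
      exact irreducibleComponent_mem_irreducibleComponents x
    by_cases h : irreducibleComponent x ∈ T
    · exact Or.inl ⟨_, h, mem_irreducibleComponent⟩
    · exact Or.inr ⟨_, Finset.mem_sdiff.mpr ⟨hx, h⟩, mem_irreducibleComponent⟩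
  have hAne : A.Nonempty := by
    obtain ⟨C, hC⟩ := hTne
    have : IsIrreducible (C : Set X) := by
      have := hTsub hC; rw [hV, Set.Finite.mem_toFinset] at this; exact this.1
    obtain ⟨y, hy⟩ := this.nonempty
    exact ⟨y, Set.mem_biUnion hC hy⟩
  have hBne : B.Nonempty := by
    obtain ⟨C, hC⟩ : (V \ T).Nonempty := by
      rw [Finset.sdiff_nonempty]; exact fun h => hTneq (Finset.Subset.antisymm hTsub h)
    have hCV := (Finset.mem_sdiff.mp hC).1
    have : IsIrreducible (C : Set X) := by
      rw [hV, Set.Finite.mem_toFinset] at hCV; exact hCV.1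
    obtain ⟨y, hy⟩ := this.nonempty
    exact ⟨y, Set.mem_biUnion hC hy⟩
  -- connectedness: A and B must meet
  have hABne : (A ∩ B).Nonempty := by
    by_contra hcon
    rw [Set.not_nonempty_iff_eq_empty] at hcon
    have hopen : IsOpen A := by
      have : A = Bᶜ := by
        apply Set.Subset.antisymm
        · intro x hx hxB
          exact Set.not_nonempty_empty ⟨x, hcon ▸ Set.mem_inter hx hxB⟩
        · intro x hx
          rcases (hcover ▸ Set.mem_univ x : x ∈ A ∪ B) with h | h
          · exact h
          · exact absurd h hx
      rw [this]
      exact hBclosed.isOpen_compl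
    have := (isClopen_iff (s := A)).mp ⟨hAclosed, hopen⟩
    rcases this with h | h
    · exact Set.not_nonempty_empty (h ▸ hAne)
    · obtain ⟨x, hx⟩ := hBne
      have hxA : x ∈ A := h ▸ Set.mem_univ x
      exact Set.not_nonempty_empty ⟨x, hcon ▸ Set.mem_inter hxA hx⟩
  obtain ⟨x, hxA, hxB⟩ := hABne
  obtain ⟨C, hCT, hxC⟩ := Set.mem_iUnion₂.mp hxA
  obtain ⟨D, hDVT, hxD⟩ := Set.mem_iUnion₂.mp hxB
  have hDV := (Finset.mem_sdiff.mp hDVT).1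
  have hDT := (Finset.mem_sdiff.mp hDVT).2
  have hCD : C ≠ D := fun h => hDT (h ▸ hCT)
  have hCmem : C ∈ irreducibleComponents X := by
    have := hTsub hCT; rwa [hV, Set.Finite.mem_toFinset] at this
  have hDmem : D ∈ irreducibleComponents X := by rwa [hV, Set.Finite.mem_toFinset] at hDV
  -- x lies on at least two components, hence x ∈ S
  have hxS : x ∈ S := by
    rw [hS]
    have hsub : ({C, D} : Set (Set X)) ⊆ {C' ∈ irreducibleComponents X | x ∈ C'} := by
      intro C' hC'
      rcases hC' with h | h
      · exact h ▸ ⟨hCmem, hxC⟩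
      · exact h ▸ ⟨hDmem, hxD⟩
    have hfin2 : {C' ∈ irreducibleComponents X | x ∈ C'}.Finite :=
      hfin.subset (Set.sep_subset _ _)
    calc 2 = ({C, D} : Set (Set X)).ncard := (Set.ncard_pair hCD).symm
      _ ≤ _ := Set.ncard_le_ncard hsub hfin2
  obtain ⟨hpne, hpset⟩ := hp x hxS
  -- {C, D} = {(p x).1, (p x).2}
  have hCp : C ∈ ({(p x).1, (p x).2} : Set (Set X)) := hpset ▸ ⟨hCmem, hxC⟩
  have hDp : D ∈ ({(p x).1, (p x).2} : Set (Set X)) := hpset ▸ ⟨hDmem, hxD⟩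
  have hedge : s(C, D) = s((p x).1, (p x).2) := by
    rw [Sym2.eq_iff]
    rcases hCp with h1 | h1 <;> rcases hDp with h2 | h2
    · exact absurd (h1.trans h2.symm) hCD
    · exact Or.inl ⟨h1, h2⟩
    · exact Or.inr ⟨h1, h2⟩
    · exact absurd (h1.trans h2.symm) hCD
  refine ⟨C, hCT, D, hDV, hDT, ?_⟩
  rw [hE, hedge]
  exact Finset.mem_image.mpr ⟨x, (Set.Finite.mem_toFinset _).mpr hxS, rfl⟩
end

section
/- Let K be a field, n ≥ 1, and let A = L₁ × ⋯ × L_n be a commutative K-algebra which is a finite direct product of fields L_i, with primitive idempotents e₁, …, e_n (e_i the identity of the factor L_i). Let G be a finite group acting on A by K-algebra automorphisms such that the induced action of G on the set {e₁, …, e_n} is transitive. Assume that the subalgebra of G-invariants A^G equals K·1_A. Then for each i, the stabilizer G_i = {g ∈ G : g(e_i) = e_i} acts on the field e_iA ≅ L_i, the fixed field (L_i)^{G_i} equals the image of the field embedding K → L_i, λ ↦ λ·e_i, and consequently L_i is a finite Galois extension of K whose Galois group is the image of the natural homomorphism from G_i to the automorphism group of L_i over K. -/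
namespace Stmt4Aux

variable {K : Type} [Field K] {n : ℕ}
  {L : Fin n → Type} [∀ i, Field (L i)] [∀ i, Algebra K (L i)]
  {G : Type} [Group G]

theorem mul_single_one (i : Fin n) (a : ∀ i, L i) :
    a * Pi.single i 1 = Pi.single i (a i) := by
  funext j
  rcases eq_or_ne j i with rfl | h
  · simp
  · simp [Pi.mul_apply, Pi.single_eq_of_ne h]

variable (ρ : G →* ((∀ i, L i) ≃ₐ[K] (∀ i, L i)))

theorem map_single {i j : Fin n} {g : G} (hg : ρ g (Pi.single i 1) = Pi.single j 1)
    (x : L i) : ρ g (Pi.single i x) = Pi.single j (ρ g (Pi.single i x) j) := by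
  have h1 : (Pi.single i x : ∀ i, L i) = Pi.single i x * Pi.single i 1 := by
    rw [mul_single_one, Pi.single_eq_same]
  conv_lhs => rw [h1, map_mul, hg, mul_single_one]

/-- The action of the stabilizer on the `i`-th component. -/
def phi (i : Fin n) (g : G) (x : L i) : L i :=
  ρ g (Pi.single i x) i

theorem key {i : Fin n} {g : G} (hg : ρ g (Pi.single i 1) = Pi.single i 1) (x : L i) :
    ρ g (Pi.single i x) = Pi.single i (phi ρ i g x) :=
  map_single ρ hg x

theorem phi_one (i : Fin n) (x : L i) : phi ρ i 1 x = x := by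
  simp [phi]

theorem phi_comp {i : Fin n} (g : G) {h : G}
    (hh : ρ h (Pi.single i 1) = Pi.single i 1) (x : L i) :
    phi ρ i (g * h) x = phi ρ i g (phi ρ i h x) := by
  unfold phi
  rw [map_mul, AlgEquiv.mul_apply, key ρ hh, Pi.single_eq_same]

theorem phi_add {i : Fin n} (g : G) (x y : L i) :
    phi ρ i g (x + y) = phi ρ i g x + phi ρ i g y := by
  unfold phi
  rw [Pi.single_add, map_add, Pi.add_apply]

theorem phi_mul {i : Fin n} (g : G) (x y : L i) :
    phi ρ i g (x * y) = phi ρ i g x * phi ρ i g y := by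
  unfold phi
  rw [Pi.single_mul, map_mul, Pi.mul_apply]

theorem single_algebraMap (i : Fin n) (c : K) :
    (Pi.single i (algebraMap K (L i) c) : ∀ i, L i)
      = algebraMap K (∀ i, L i) c * Pi.single i 1 := by
  rw [mul_single_one]
  rfl

theorem phi_commutes {i : Fin n} {g : G}
    (hg : ρ g (Pi.single i 1) = Pi.single i 1) (c : K) :
    phi ρ i g (algebraMap K (L i) c) = algebraMap K (L i) c := by
  unfold phi
  rw [single_algebraMap, map_mul, AlgEquiv.commutes, hg, mul_single_one,
    Pi.single_eq_same]
  rfl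

/-- The induced homomorphism from the stabilizer to the automorphism group. -/
def sigma (i : Fin n) (Gi : Subgroup G)
    (hGi : ∀ g ∈ Gi, ρ g (Pi.single i 1) = Pi.single i 1) :
    Gi →* (L i ≃ₐ[K] L i) where
  toFun g :=
    { toFun := phi ρ i (g : G)
      invFun := phi ρ i ((g⁻¹ : Gi) : G)
      left_inv := fun x => by
        rw [← phi_comp ρ _ (hGi _ g.2) x, ← Subgroup.coe_mul, inv_mul_cancel,
          Subgroup.coe_one, phi_one]
      right_inv := fun x => by
        rw [← phi_comp ρ _ (hGi _ (g⁻¹ : Gi).2) x, ← Subgroup.coe_mul, mul_inv_cancel,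
          Subgroup.coe_one, phi_one]
      map_add' := phi_add ρ _
      map_mul' := phi_mul ρ _
      commutes' := phi_commutes ρ (hGi _ g.2) }
  map_one' := by
    ext x
    exact phi_one ρ i x
  map_mul' g h := by
    ext x
    exact phi_comp ρ (g : G) (hGi _ h.2) x

end Stmt4Aux

/-- Let `K` be a field and `A = L₁ × ⋯ × Lₙ` (`n ≥ 1`) a finite product of
fields, a `K`-algebra, with primitive idempotents `eᵢ = Pi.single i 1`.  Let a finite group
`G` act on `A` by `K`-algebra automorphisms, permuting the primitive idempotents
transitively, and assume `A^G = K·1`.  Then for each `i`, the stabilizer `Gᵢ` of `eᵢ` acts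
on the field `eᵢA ≅ Lᵢ` (there is an induced homomorphism `σ : Gᵢ →* Aut_K(Lᵢ)` with
`ρ g (single i x) = single i (σ g x)`), the fixed field of this action is the image of
`K → Lᵢ`, and `Lᵢ/K` is a finite Galois extension whose Galois group (the full automorphism
group `Lᵢ ≃ₐ[K] Lᵢ`) is the image of `σ`, i.e. `σ` is surjective. -/
theorem stmt4 (K : Type) [Field K] (n : ℕ) (hn : 1 ≤ n)
    (L : Fin n → Type) [∀ i, Field (L i)] [∀ i, Algebra K (L i)]
    (G : Type) [Group G] [Finite G]
    (ρ : G →* ((∀ i, L i) ≃ₐ[K] (∀ i, L i)))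
    (hperm : ∀ (g : G) (i : Fin n), ∃ j, ρ g (Pi.single i 1) = Pi.single j 1)
    (htrans : ∀ i j : Fin n, ∃ g : G, ρ g (Pi.single i 1) = Pi.single j 1)
    (hinv : ∀ a : ∀ i, L i, (∀ g : G, ρ g a = a) →
      ∃ c : K, a = algebraMap K (∀ i, L i) c)
    (i : Fin n) (Gi : Subgroup G)
    (hGi : ∀ g : G, g ∈ Gi ↔ ρ g (Pi.single i 1) = Pi.single i 1) :
    ∃ σ : Gi →* (L i ≃ₐ[K] L i),
      (∀ (g : Gi) (x : L i), ρ (g : G) (Pi.single i x) = Pi.single i (σ g x)) ∧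
      {x : L i | ∀ g : Gi, σ g x = x} = Set.range (algebraMap K (L i)) ∧
      FiniteDimensional K (L i) ∧ IsGalois K (L i) ∧
      Function.Surjective σ := by
  classical
  set σ : Gi →* (L i ≃ₐ[K] L i) :=
    Stmt4Aux.sigma ρ i Gi (fun g hg => (hGi g).1 hg) with hσdef
  have hkey : ∀ (g : Gi) (x : L i),
      ρ (g : G) (Pi.single i x) = Pi.single i (σ g x) :=
    fun g x => Stmt4Aux.key ρ ((hGi g).1 g.2) x
  -- the fixed "field" (as a set) is the image of K
  have hfix : {x : L i | ∀ g : Gi, σ g x = x} = Set.range (algebraMap K (L i)) := by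
    ext x
    constructor
    · intro hx
      choose gs hgs using htrans i
      -- well-definedness
      have W : ∀ g g' : G, ρ g (Pi.single i 1) = ρ g' (Pi.single i 1) →
          ρ g (Pi.single i x) = ρ g' (Pi.single i x) := by
        intro g g' h
        have hmem : g'⁻¹ * g ∈ Gi := by
          rw [hGi, map_mul, AlgEquiv.mul_apply, h, ← AlgEquiv.mul_apply, ← map_mul,
            inv_mul_cancel, map_one, AlgEquiv.one_apply]
        have h2 := hkey ⟨g'⁻¹ * g, hmem⟩ x
        rw [hx ⟨g'⁻¹ * g, hmem⟩] at h2
        calc ρ g (Pi.single i x)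
            = ρ g' (ρ (g'⁻¹ * g) (Pi.single i x)) := by
              rw [← AlgEquiv.mul_apply, ← map_mul, mul_inv_cancel_left]
          _ = ρ g' (Pi.single i x) := by rw [h2]
      set a : ∀ j, L j := ∑ j, ρ (gs j) (Pi.single i x) with ha
      have hfixa : ∀ g : G, ρ g a = a := by
        intro g
        choose τ hτ using fun j => hperm g j
        have hτinj : Function.Injective τ := by
          intro j j' hjj
          have h1 : ρ g (Pi.single j (1 : L j)) = ρ g (Pi.single j' (1 : L j')) := by
            rw [hτ j, hτ j', hjj]
          have h2 := (ρ g).injective h1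
          by_contra hne
          have := congrFun h2 j
          rw [Pi.single_eq_same, Pi.single_eq_of_ne hne] at this
          exact one_ne_zero this
        have hτbij : Function.Bijective τ := Finite.injective_iff_bijective.mp hτinj
        rw [ha, map_sum]
        calc ∑ j, ρ g (ρ (gs j) (Pi.single i x))
            = ∑ j, ρ (gs (τ j)) (Pi.single i x) := by
              refine Finset.sum_congr rfl fun j _ => ?_
              rw [← AlgEquiv.mul_apply, ← map_mul]
              apply W
              rw [map_mul, AlgEquiv.mul_apply, hgs j, hτ j, hgs (τ j)]
          _ = ∑ j, ρ (gs j) (Pi.single i x) :=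
              hτbij.sum_comp (fun j => ρ (gs j) (Pi.single i x))
      obtain ⟨c, hc⟩ := hinv a hfixa
      have hai : a i = x := by
        rw [ha, Finset.sum_apply]
        rw [Finset.sum_eq_single i]
        · have hmem : gs i ∈ Gi := (hGi _).2 (hgs i)
          have := hkey ⟨gs i, hmem⟩ x
          rw [hx ⟨gs i, hmem⟩] at this
          rw [this, Pi.single_eq_same]
        · intro j _ hj
          rw [Stmt4Aux.map_single ρ (hgs j) x, Pi.single_eq_of_ne (Ne.symm hj)]
        · intro h
          exact absurd (Finset.mem_univ i) h
      refine ⟨c, ?_⟩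
      rw [← hai, hc]
      rfl
    · rintro ⟨c, rfl⟩ g
      exact (σ g).commutes c
  -- finiteness of the range of σ
  have hfinr : Finite σ.range := Set.Finite.to_subtype (Set.finite_range σ)
  -- the fixed subfield of σ.range is the image of K
  have hSset : ∀ x : L i, (∀ h : σ.range, (h : L i ≃ₐ[K] L i) x = x) ↔
      x ∈ Set.range (algebraMap K (L i)) := by
    intro x
    rw [← hfix]
    constructor
    · intro hx g
      exact hx ⟨σ g, ⟨g, rfl⟩⟩
    · rintro hx ⟨-, g, rfl⟩
      exact hx g
  -- finite dimensionality via Artin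
  have hFD : FiniteDimensional K (L i) := by
    set S := FixedPoints.subfield σ.range (L i) with hS
    have hFDS : FiniteDimensional S (L i) := inferInstance
    obtain ⟨s, hs⟩ := Module.finite_def.mp hFDS
    refine ⟨⟨s, ?_⟩⟩
    rw [eq_top_iff]
    rintro x -
    have hx : x ∈ Submodule.span S (s : Set (L i)) := by rw [hs]; trivial
    refine Submodule.span_induction (fun y hy => Submodule.subset_span hy)
      (Submodule.zero_mem _) (fun y z _ _ hy hz => Submodule.add_mem _ hy hz)
      (fun c y _ hy => ?_) hx
    have hc : (c : L i) ∈ Set.range (algebraMap K (L i)) :=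
      (hSset (c : L i)).mp (fun h => c.2 h)
    obtain ⟨k, hk⟩ := hc
    have : c • y = k • y := by
      rw [Algebra.smul_def, Algebra.smul_def, hk]
      rfl
    rw [this]
    exact Submodule.smul_mem _ k hy
  -- the fixed field of the full automorphism group is ⊥
  have hffr : IntermediateField.fixedField σ.range = ⊥ := by
    refine le_antisymm ?_ bot_le
    intro x hx
    rw [IntermediateField.mem_bot]
    exact (hSset x).mp (fun h => hx h)
  have hbot : IntermediateField.fixedField (⊤ : Subgroup ((L i) ≃ₐ[K] (L i))) = ⊥ := by
    refine le_antisymm ?_ bot_le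
    intro x hx
    rw [IntermediateField.mem_bot]
    exact (hSset x).mp (fun h => hx ⟨(h : L i ≃ₐ[K] L i), trivial⟩)
  haveI := hFD
  have hGal : IsGalois K (L i) := IsGalois.of_fixedField_eq_bot (F := K) (E := L i) hbot
  -- surjectivity via the Galois correspondence
  have hfs := IntermediateField.fixingSubgroup_fixedField σ.range
  rw [hffr] at hfs
  have htop : σ.range = ⊤ := by
    rw [← hfs]
    ext g
    simp only [Subgroup.mem_top, iff_true]
    rw [IntermediateField.fixingSubgroup, mem_fixingSubgroup_iff]
    intro y hy
    obtain ⟨k, hk⟩ := IntermediateField.mem_bot.mp hy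
    rw [← hk]
    exact g.commutes k
  exact ⟨σ, hkey, hfix, hFD, hGal, MonoidHom.range_eq_top.mp htop⟩
end

section
/- Let k be a field, A = k[X, Y]/(XY), and let 𝔪 be the maximal ideal of A generated by the images of X and Y (the origin of the union of the two coordinate axes). Let B be a commutative A-algebra that is finite and flat as an A-module, and let 𝔮 be a prime ideal of B lying over 𝔪. Then the localization B_𝔮 is not an integral domain; in particular, B_𝔮 is not a regular local ring. -/
set_option maxHeartbeats 1600000

/-- The coordinate ring `k[X, Y]/(XY)` of the union of the two coordinate axes. -/
noncomputable abbrev NodeRing (k : Type) [Field k] : Type :=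
  MvPolynomial (Fin 2) k ⧸
    Ideal.span {(MvPolynomial.X 0 : MvPolynomial (Fin 2) k) * MvPolynomial.X 1}

/-- The maximal ideal of `k[X, Y]/(XY)` generated by the images of `X` and `Y`
(the origin, i.e. the node). -/
noncomputable abbrev nodeMaxIdeal (k : Type) [Field k] : Ideal (NodeRing k) :=
  Ideal.span
    {Ideal.Quotient.mk _ (MvPolynomial.X 0 : MvPolynomial (Fin 2) k),
     Ideal.Quotient.mk _ (MvPolynomial.X 1 : MvPolynomial (Fin 2) k)}

/-- A commutative ring is a regular local ring if it is a Noetherian local ring whose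
embedding dimension (the dimension of the cotangent space `𝔪/𝔪²` over the residue field)
equals its Krull dimension. -/
def IsRegularLocalRing' (R : Type) [CommRing R] : Prop :=
  ∃ (_ : IsLocalRing R) (_ : IsNoetherianRing R),
    (Module.finrank (IsLocalRing.ResidueField R) (IsLocalRing.CotangentSpace R) :
      WithBot (WithTop ℕ)) = ringKrullDim R

open Polynomial in
/-- In a PID (domain), Spec has Krull dimension at most 1. -/
lemma aux_pid_spec_le_one (R : Type*) [CommRing R] [IsDomain R] [IsPrincipalIdealRing R] :
    Order.krullDim (PrimeSpectrum R) ≤ 1 := by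
  apply iSup_le
  intro p
  suffices h : p.length ≤ 1 by exact_mod_cast h
  by_contra h
  push_neg at h
  have h0 : (⟨0, by omega⟩ : Fin (p.length + 1)) < ⟨1, by omega⟩ := Fin.mk_lt_mk.mpr (by omega)
  have h1 : (⟨1, by omega⟩ : Fin (p.length + 1)) < ⟨2, by omega⟩ := Fin.mk_lt_mk.mpr (by omega)
  have h01 := p.strictMono h0
  have h12 := p.strictMono h1
  set P0 := p.toFun ⟨0, by omega⟩
  set P1 := p.toFun ⟨1, by omega⟩
  set P2 := p.toFun ⟨2, by omega⟩
  have h01' : P0.asIdeal < P1.asIdeal :=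
    lt_of_le_of_ne h01.le (fun e => h01.ne (PrimeSpectrum.ext e))
  have h12' : P1.asIdeal < P2.asIdeal :=
    lt_of_le_of_ne h12.le (fun e => h12.ne (PrimeSpectrum.ext e))
  have hne : P1.asIdeal ≠ ⊥ := by
    intro e
    rw [e] at h01'
    exact not_lt_bot h01'
  haveI := P1.isPrime
  have hmax : P1.asIdeal.IsMaximal := IsPrime.to_maximal_ideal hne
  exact P2.isPrime.ne_top (hmax.1.2 _ h12')

open TensorProduct in
/-- Flatness transfers an annihilator relation: if `x * y = 0` in `A`, the annihilator of
`x` in `A` is contained in `(y)`, and `B` is a flat `A`-algebra, then any element of `B`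
killed by `x` is a multiple of `y`. -/
lemma aux_flat_ann {A B : Type} [CommRing A] [CommRing B] [Algebra A B] [Module.Flat A B]
    {x y : A} (hxy : x * y = 0)
    (hann : ∀ a : A, x * a = 0 → a ∈ Ideal.span {y})
    (s : B) (hs : algebraMap A B x * s = 0) : ∃ t : B, s = algebraMap A B y * t := by
  classical
  set f : A →ₗ[A] A := LinearMap.lsmul A A y with hf
  set g : A →ₗ[A] A := LinearMap.lsmul A A x with hg
  have hexact : Function.Exact f g := by
    intro a
    constructor
    · intro h
      have : a ∈ Ideal.span {y} := hann a (by simpa [hg, smul_eq_mul] using h)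
      obtain ⟨c, hc⟩ := Ideal.mem_span_singleton'.mp this
      exact ⟨c, by simp [hf, smul_eq_mul, mul_comm y c, hc]⟩
    · rintro ⟨c, rfl⟩
      simp only [hf, hg, LinearMap.lsmul_apply, smul_eq_mul, ← mul_assoc, hxy, zero_mul]
  have hE := Module.Flat.lTensor_exact B hexact
  have h1 : (g.lTensor B) (s ⊗ₜ[A] (1 : A)) = 0 := by
    have h2 : (g.lTensor B) (s ⊗ₜ[A] (1 : A)) = s ⊗ₜ[A] x := by
      simp [hg, LinearMap.lTensor_tmul, smul_eq_mul]
    rw [h2]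
    have h3 : s ⊗ₜ[A] x = (x • s) ⊗ₜ[A] (1 : A) := by
      rw [← TensorProduct.smul_tmul', ← TensorProduct.tmul_smul, smul_eq_mul, mul_one]
    rw [h3, Algebra.smul_def, hs, TensorProduct.zero_tmul]
  obtain ⟨v, hv⟩ := (hE _).mp h1
  refine ⟨TensorProduct.rid A B v, ?_⟩
  have key : ∀ w : B ⊗[A] A, TensorProduct.rid A B (f.lTensor B w) =
      y • TensorProduct.rid A B w := by
    intro w
    induction w using TensorProduct.induction_on with
    | zero => simp
    | tmul b a => simp [hf, LinearMap.lTensor_tmul, smul_eq_mul, TensorProduct.rid_tmul,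
        mul_smul, mul_comm]
    | add u w hu hw => simp [map_add, hu, hw, smul_add]
  have h4 : s = TensorProduct.rid A B (f.lTensor B v) := by
    rw [hv]; simp [TensorProduct.rid_tmul]
  rw [h4, key, Algebra.smul_def]

open MvPolynomial in
lemma aux_node_mul (k : Type) [Field k] :
    (Ideal.Quotient.mk _ (X 0 : MvPolynomial (Fin 2) k) : NodeRing k) *
      Ideal.Quotient.mk _ (X 1) = 0 := by
  rw [← map_mul, Ideal.Quotient.eq_zero_iff_mem]
  exact Ideal.subset_span rfl

open MvPolynomial in
lemma aux_node_ann (k : Type) [Field k] (i j : Fin 2) (hij : i ≠ j)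
    (a : NodeRing k) (ha : Ideal.Quotient.mk _ (X i) * a = 0) :
    a ∈ Ideal.span {(Ideal.Quotient.mk _ (X j) : NodeRing k)} := by
  obtain ⟨p, rfl⟩ := Ideal.Quotient.mk_surjective a
  rw [← map_mul, Ideal.Quotient.eq_zero_iff_mem, Ideal.mem_span_singleton] at ha
  have hij2 : X i * X j = (X 0 : MvPolynomial (Fin 2) k) * X 1 := by
    fin_cases i <;> fin_cases j <;> simp_all <;> first | rfl | rw [mul_comm]
  obtain ⟨q, hq⟩ := ha
  have hdvd : X j ∣ p := by
    have hX : (X i : MvPolynomial (Fin 2) k) ≠ 0 := X_ne_zero i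
    have h5 : X i * p = X i * (X j * q) := by
      rw [hq, ← hij2]; ring
    exact ⟨q, mul_left_cancel₀ hX h5⟩
  obtain ⟨q, rfl⟩ := hdvd
  rw [Ideal.mem_span_singleton, map_mul]
  exact Dvd.intro _ rfl

open IsLocalRing in
/-- A Noetherian local ring with principal maximal ideal and nonzero Krull dimension is a
domain. -/
lemma aux_domain_of_principal_maximalIdeal (R : Type) [CommRing R] [IsNoetherianRing R]
    [IsLocalRing R] {t : R} (ht : maximalIdeal R = Ideal.span {t})
    (hdim : ringKrullDim R ≠ 0) : IsDomain R := by
  classical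
  have htnil : ∀ n : ℕ, t ^ n ≠ 0 := by
    intro n hn
    apply hdim
    have hsub : ∀ P Q : PrimeSpectrum R, P = Q := by
      intro P Q
      have key : ∀ S : PrimeSpectrum R, S.asIdeal = maximalIdeal R := by
        intro S
        refine le_antisymm (le_maximalIdeal S.isPrime.ne_top) ?_
        rw [ht, Ideal.span_le, Set.singleton_subset_iff]
        exact S.isPrime.mem_of_pow_mem n (by rw [hn]; exact S.asIdeal.zero_mem)
      exact PrimeSpectrum.ext ((key P).trans (key Q).symm)
    obtain ⟨P⟩ := (inferInstance : Nonempty (PrimeSpectrum R))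
    haveI : Unique (PrimeSpectrum R) := ⟨⟨P⟩, fun Q => hsub Q P⟩
    exact Order.krullDim_eq_zero_of_unique
  have hfact : ∀ a : R, a ≠ 0 → ∃ (n : ℕ) (u : R), IsUnit u ∧ a = t ^ n * u := by
    intro a ha
    have hex : ∃ m : ℕ, a ∉ maximalIdeal R ^ m := by
      by_contra h
      push_neg at h
      apply ha
      have hb : a ∈ (⊥ : Ideal R) := by
        rw [← Ideal.iInf_pow_eq_bot_of_isLocalRing (maximalIdeal R)
          (Ideal.IsMaximal.ne_top (maximalIdeal.isMaximal R))]
        exact Ideal.mem_iInf.mpr h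
      simpa using hb
    set N := Nat.find hex with hN
    have hNs : a ∉ maximalIdeal R ^ N := Nat.find_spec hex
    have hN0 : N ≠ 0 := by
      intro h
      apply hNs
      rw [h, pow_zero, Ideal.one_eq_top]
      trivial
    obtain ⟨n, hNn⟩ : ∃ n, N = n + 1 :=
      ⟨N - 1, (Nat.succ_pred_eq_of_pos (Nat.pos_of_ne_zero hN0)).symm⟩
    rw [hNn] at hNs
    have hmem : a ∈ maximalIdeal R ^ n := by
      by_contra h
      exact Nat.find_min hex (show n < N by omega) h
    rw [ht, Ideal.span_singleton_pow, Ideal.mem_span_singleton] at hmem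
    obtain ⟨u, hu⟩ := hmem
    refine ⟨n, u, ?_, hu⟩
    by_contra hnu
    apply hNs
    have humem : u ∈ maximalIdeal R := hnu
    rw [ht, Ideal.mem_span_singleton] at humem
    obtain ⟨v, rfl⟩ := humem
    rw [ht, Ideal.span_singleton_pow, Ideal.mem_span_singleton, hu]
    exact ⟨v, by ring⟩
  haveI : NoZeroDivisors R := by
    constructor
    intro a b hab
    by_contra h
    push_neg at h
    obtain ⟨ha, hb⟩ := h
    obtain ⟨n, u, hu, rfl⟩ := hfact a ha
    obtain ⟨m, v, hv, rfl⟩ := hfact b hb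
    have h0 : (u * v) * t ^ (n + m) = 0 := by rw [← hab]; ring
    exact htnil (n + m) (((hu.mul hv).mul_right_eq_zero).mp h0)
  exact NoZeroDivisors.to_isDomain R

open MvPolynomial in
/-- `k[X,Y]/(XY)` is integral over `k[T]`, `T ↦ X + Y`. -/
lemma aux_node_integral (k : Type) [Field k] :
    (((Polynomial.aeval ((Ideal.Quotient.mk _ (X 0 : MvPolynomial (Fin 2) k) : NodeRing k) +
        Ideal.Quotient.mk _ (X 1))).toRingHom : Polynomial k →+* NodeRing k)).IsIntegral := by
  classical
  set x0 : NodeRing k := Ideal.Quotient.mk _ (X 0) with hx0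
  set x1 : NodeRing k := Ideal.Quotient.mk _ (X 1) with hx1
  have hmul : x0 * x1 = 0 := aux_node_mul k
  set φ : Polynomial k →+* NodeRing k := (Polynomial.aeval (x0 + x1)).toRingHom with hφ
  letI : Algebra (Polynomial k) (NodeRing k) := φ.toAlgebra
  have halg : algebraMap (Polynomial k) (NodeRing k) = φ := rfl
  intro a
  have hadj : Algebra.adjoin k
      (Set.range fun i : Fin 2 => (Ideal.Quotient.mk _ (X i) : NodeRing k)) = ⊤ := by
    have h1 : Algebra.adjoin k (Set.range (X : Fin 2 → MvPolynomial (Fin 2) k)) = ⊤ :=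
      MvPolynomial.adjoin_range_X
    have h2 := AlgHom.map_adjoin (Ideal.Quotient.mkₐ k
      (Ideal.span {(X 0 : MvPolynomial (Fin 2) k) * X 1}))
      (Set.range (X : Fin 2 → MvPolynomial (Fin 2) k))
    rw [h1, ← Set.range_comp] at h2
    have h3 : Subalgebra.map (Ideal.Quotient.mkₐ k
        (Ideal.span {(X 0 : MvPolynomial (Fin 2) k) * X 1}))
        (⊤ : Subalgebra k (MvPolynomial (Fin 2) k)) = ⊤ := by
      rw [Algebra.map_top, AlgHom.range_eq_top]
      exact Ideal.Quotient.mkₐ_surjective k _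
    rw [h3] at h2
    exact h2.symm
  have ha : a ∈ Algebra.adjoin k
      (Set.range fun i : Fin 2 => (Ideal.Quotient.mk _ (X i) : NodeRing k)) := by
    rw [hadj]; trivial
  have key : a ∈ integralClosure (Polynomial k) (NodeRing k) := by
    refine Algebra.adjoin_induction ?_ ?_ ?_ ?_ ha
    · rintro _ ⟨i, rfl⟩
      refine ⟨Polynomial.X ^ 2 - Polynomial.C Polynomial.X * Polynomial.X, ?_, ?_⟩
      · apply Polynomial.monic_X_pow_sub
        have hd : (Polynomial.C (Polynomial.X : Polynomial k) * Polynomial.X).degree ≤ 1 := by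
          refine le_trans (Polynomial.degree_mul_le _ _) ?_
          rw [Polynomial.degree_X]
          exact le_trans (add_le_add_left Polynomial.degree_C_le _) (by norm_num)
        exact lt_of_le_of_lt hd (by norm_num)
      · have hT : φ Polynomial.X = x0 + x1 := by simp [hφ]
        simp only [Polynomial.eval₂_sub, Polynomial.eval₂_pow, Polynomial.eval₂_mul,
          Polynomial.eval₂_C, Polynomial.eval₂_X, halg]
        rw [hT]
        fin_cases i <;> simp only [Fin.mk_zero, Fin.mk_one, ← hx0, ← hx1] <;>
          linear_combination (-1 : NodeRing k) * hmul
    · intro r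
      have hr : algebraMap k (NodeRing k) r = φ (Polynomial.C r) := by simp [hφ]
      rw [hr, ← halg]
      exact isIntegral_algebraMap
    · intro a b _ _ ha hb; exact (integralClosure _ _).add_mem ha hb
    · intro a b _ _ ha hb; exact (integralClosure _ _).mul_mem ha hb
  exact key

open MvPolynomial in
/-- Key dimension bound: the localization of a finite `NodeRing k`-algebra at a prime has
Krull dimension at most 1. -/
lemma aux_loc_dim_le (k : Type) [Field k]
    (B : Type) [CommRing B] [Algebra (NodeRing k) B]
    (hfin : Module.Finite (NodeRing k) B)
    (𝔮 : Ideal B) [𝔮.IsPrime] :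
    ringKrullDim (Localization.AtPrime 𝔮) ≤ 1 := by
  classical
  haveI := hfin
  set φ : Polynomial k →+* NodeRing k :=
    ((Polynomial.aeval ((Ideal.Quotient.mk _ (X 0 : MvPolynomial (Fin 2) k) : NodeRing k) +
        Ideal.Quotient.mk _ (X 1))).toRingHom) with hφdef
  have hφ : φ.IsIntegral := aux_node_integral k
  have hAB : (algebraMap (NodeRing k) B).IsIntegral :=
    fun b => Algebra.IsIntegral.isIntegral b
  set ψ : Polynomial k →+* B := (algebraMap (NodeRing k) B).comp φ with hψdef
  have hψ : ψ.IsIntegral := RingHom.IsIntegral.trans φ (algebraMap (NodeRing k) B) hφ hAB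
  letI : Algebra (Polynomial k) B := ψ.toAlgebra
  have halg : algebraMap (Polynomial k) B = ψ := rfl
  set R := Localization.AtPrime 𝔮 with hRdef
  set F : PrimeSpectrum R → PrimeSpectrum (Polynomial k) := fun P =>
    ⟨Ideal.comap ψ (Ideal.comap (algebraMap B R) P.asIdeal), by
      haveI : (Ideal.comap (algebraMap B R) P.asIdeal).IsPrime :=
        Ideal.IsPrime.comap _
      exact Ideal.IsPrime.comap _⟩ with hFdef
  have hF : StrictMono F := by
    intro P Q h
    have h' : P.asIdeal < Q.asIdeal :=
      lt_of_le_of_ne h.le (fun e => h.ne (PrimeSpectrum.ext e))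
    have h1 : Ideal.comap (algebraMap B R) P.asIdeal <
        Ideal.comap (algebraMap B R) Q.asIdeal :=
      (IsLocalization.orderEmbedding 𝔮.primeCompl R).strictMono h'
    haveI : (Ideal.comap (algebraMap B R) P.asIdeal).IsPrime := Ideal.IsPrime.comap _
    obtain ⟨b, hbJ, hbI⟩ := SetLike.exists_of_lt h1
    have h2 := Ideal.comap_lt_comap_of_integral_mem_sdiff (R := Polynomial k)
      (le_of_lt h1) ⟨hbJ, hbI⟩ (hψ b)
    exact lt_of_le_of_ne (show F P ≤ F Q from h2.le)
      (fun e => h2.ne (congrArg PrimeSpectrum.asIdeal e))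
  calc ringKrullDim R ≤ Order.krullDim (PrimeSpectrum (Polynomial k)) :=
        Order.krullDim_le_of_strictMono F hF
    _ ≤ 1 := aux_pid_spec_le_one (Polynomial k)

/-- Let `k` be a field, `A = k[X, Y]/(XY)`, `𝔪 = (X, Y)` the maximal ideal
at the node.  Let `B` be a commutative `A`-algebra, finite and flat as an `A`-module, and
`𝔮` a prime ideal of `B` lying over `𝔪`.  Then the localization `B_𝔮` is not an integral
domain; in particular it is not a regular local ring. -/
theorem stmt5 (k : Type) [Field k]
    (B : Type) [CommRing B] [Algebra (NodeRing k) B]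
    (hfin : Module.Finite (NodeRing k) B)
    (hflat : Module.Flat (NodeRing k) B)
    (𝔮 : Ideal B) [𝔮.IsPrime]
    (hover : Ideal.comap (algebraMap (NodeRing k) B) 𝔮 = nodeMaxIdeal k) :
    ¬ IsDomain (Localization.AtPrime 𝔮) ∧
      ¬ IsRegularLocalRing' (Localization.AtPrime 𝔮) := by
  classical
  haveI := hfin
  haveI := hflat
  set A := NodeRing k with hA
  set R := Localization.AtPrime 𝔮 with hR
  set xA : A := Ideal.Quotient.mk _ (MvPolynomial.X 0) with hxA
  set yA : A := Ideal.Quotient.mk _ (MvPolynomial.X 1) with hyA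
  have hmul : xA * yA = 0 := aux_node_mul k
  have hx𝔪 : xA ∈ nodeMaxIdeal k := Ideal.subset_span (Set.mem_insert _ _)
  have hy𝔪 : yA ∈ nodeMaxIdeal k := Ideal.subset_span (Set.mem_insert_of_mem _ rfl)
  have hxq : algebraMap A B xA ∈ 𝔮 := by
    rw [← hover] at hx𝔪; exact hx𝔪
  have hyq : algebraMap A B yA ∈ 𝔮 := by
    rw [← hover] at hy𝔪; exact hy𝔪
  -- the images of x and y in B_𝔮 are nonzero
  have hxR : algebraMap B R (algebraMap A B xA) ≠ 0 := by
    intro h0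
    obtain ⟨⟨s, hs⟩, hm⟩ :=
      (IsLocalization.map_eq_zero_iff 𝔮.primeCompl R (algebraMap A B xA)).mp h0
    obtain ⟨t, ht⟩ := aux_flat_ann hmul (aux_node_ann k 0 1 (by decide)) s
      (by rw [mul_comm]; exact hm)
    apply hs
    rw [ht]
    exact Ideal.mul_mem_right _ _ hyq
  have hyR : algebraMap B R (algebraMap A B yA) ≠ 0 := by
    intro h0
    obtain ⟨⟨s, hs⟩, hm⟩ :=
      (IsLocalization.map_eq_zero_iff 𝔮.primeCompl R (algebraMap A B yA)).mp h0
    obtain ⟨t, ht⟩ := aux_flat_ann (by rw [mul_comm]; exact hmul)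
      (aux_node_ann k 1 0 (by decide)) s (by rw [mul_comm]; exact hm)
    apply hs
    rw [ht]
    exact Ideal.mul_mem_right _ _ hxq
  have hprod : algebraMap B R (algebraMap A B xA) * algebraMap B R (algebraMap A B yA) = 0 := by
    rw [← map_mul, ← map_mul, hmul, map_zero, map_zero]
  have hnd : ¬ IsDomain R := by
    intro hD
    haveI := hD
    rcases mul_eq_zero.mp hprod with h | h
    · exact hxR h
    · exact hyR h
  refine ⟨hnd, ?_⟩
  rintro ⟨hloc, hnoeth, heq⟩
  haveI := hloc
  haveI := hnoeth
  have hd1 : ringKrullDim R ≤ 1 := aux_loc_dim_le k B hfin 𝔮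
  set d := Module.finrank (IsLocalRing.ResidueField R) (IsLocalRing.CotangentSpace R) with hd
  have hle : (d : WithBot (WithTop ℕ)) ≤ 1 := heq ▸ hd1
  have hdle : d ≤ 1 := by exact_mod_cast hle
  rcases Nat.le_one_iff_eq_zero_or_eq_one.mp hdle with h0 | h1
  · have hfield : IsField R := IsLocalRing.finrank_cotangentSpace_eq_zero_iff.mp h0
    letI := hfield.toField
    exact hnd inferInstance
  · have hprin : (IsLocalRing.maximalIdeal R).IsPrincipal :=
      IsLocalRing.finrank_cotangentSpace_le_one_iff.mp (le_of_eq h1)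
    obtain ⟨t, ht⟩ := hprin
    have hne0 : ringKrullDim R ≠ 0 := by
      rw [← heq, h1]
      intro hcontra
      exact one_ne_zero hcontra
    exact hnd (aux_domain_of_principal_maximalIdeal R ht hne0)
end
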